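/- arXiv:2407.18159 — 3 statements merged into one kernel-verified Lean document; each statement's English description precedes it below -/
import Mathlib

section
/- For a constant reference d, the trajectory r(t) = φ_r(t,0)·r(0) + (1 − φ_r(t,0))·d, with φ_r(t,0) = cosh((T−t)/α)/cosh(T/α), solves the closed-loop ODE r'(t) = −(1/α²)p(t)(r(t) − d), where p(t) = α·tanh((T−t)/α). -/
/-- For a constant reference `d`, the trajectory
`r(t) = φ_r(t,0) r(0) + (1 − φ_r(t,0)) d`, with `φ_r(t,0) = cosh((T−t)/α)/cosh(T/α)`,
solves the closed-loop ODE `r'(t) = −(1/α²) p(t) (r(t) − d)`, with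
`p(t) = α tanh((T−t)/α)`. -/
theorem stmt3 (α T d r0 : ℝ) (hα : 0 < α) (hT : 0 < T) :
    ∀ t ∈ Set.Icc (0 : ℝ) T,
      HasDerivAt
        (fun s => (Real.cosh ((T - s) / α) / Real.cosh (T / α)) * r0
          + (1 - Real.cosh ((T - s) / α) / Real.cosh (T / α)) * d)
        (-(1 / α ^ 2) * (α * Real.tanh ((T - t) / α))
          * (((Real.cosh ((T - t) / α) / Real.cosh (T / α)) * r0
              + (1 - Real.cosh ((T - t) / α) / Real.cosh (T / α)) * d) - d)) t := by
  intro t ht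
  have hα' : α ≠ 0 := ne_of_gt hα
  have hin : HasDerivAt (fun s : ℝ => (T - s) / α) (-1 / α) t := by
    simpa using (((hasDerivAt_id t).const_sub T).div_const α)
  have hcosh : HasDerivAt (fun s : ℝ => Real.cosh ((T - s) / α))
      (Real.sinh ((T - t) / α) * (-1 / α)) t :=
    (Real.hasDerivAt_cosh _).comp t hin
  have h := ((hcosh.div_const (Real.cosh (T / α))).mul_const r0).add
    (((hcosh.div_const (Real.cosh (T / α))).const_sub 1).mul_const d)
  convert h using 1
  · rfl
  · rfl
  · rfl
  have hc : Real.cosh ((T - t) / α) ≠ 0 := ne_of_gt (Real.cosh_pos _)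
  rw [Real.tanh_eq_sinh_div_cosh]
  field_simp
  ring
end

section
/- For constant reference d, the optimal trajectory r(t) = φ_r(t,0)r(0) + (1−φ_r(t,0))d with control u(t) = −(1/α²)p(t)(r(t)−d) attains cost ∫_0^T ((r(t)−d)² + α²u(t)²) dt = (r(0) − d)²·α·tanh(T/α). -/
/-- For constant reference `d`, the optimal trajectory
`r(t) = φ_r(t,0) r(0) + (1−φ_r(t,0)) d` with control `u(t) = −(1/α²) p(t) (r(t)−d)`
attains cost `∫_0^T ((r−d)² + α² u²) dt = (r(0) − d)² α tanh(T/α)`. -/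
theorem stmt4 (α T d r0 : ℝ) (hα : 0 < α) (hT : 0 < T) :
    (∫ t in (0:ℝ)..T,
      (((Real.cosh ((T - t) / α) / Real.cosh (T / α)) * r0
          + (1 - Real.cosh ((T - t) / α) / Real.cosh (T / α)) * d - d) ^ 2
        + α ^ 2 * (-(1 / α ^ 2) * (α * Real.tanh ((T - t) / α))
            * (((Real.cosh ((T - t) / α) / Real.cosh (T / α)) * r0
                + (1 - Real.cosh ((T - t) / α) / Real.cosh (T / α)) * d) - d)) ^ 2))
      = (r0 - d) ^ 2 * α * Real.tanh (T / α) := by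
  have hα0 : α ≠ 0 := ne_of_gt hα
  have hcT : Real.cosh (T / α) ≠ 0 := ne_of_gt (Real.cosh_pos _)
  set C : ℝ := (r0 - d) ^ 2 / Real.cosh (T / α) ^ 2 with hC
  have hcongr : ∀ t : ℝ,
      (((Real.cosh ((T - t) / α) / Real.cosh (T / α)) * r0
          + (1 - Real.cosh ((T - t) / α) / Real.cosh (T / α)) * d - d) ^ 2
        + α ^ 2 * (-(1 / α ^ 2) * (α * Real.tanh ((T - t) / α))
            * (((Real.cosh ((T - t) / α) / Real.cosh (T / α)) * r0
                + (1 - Real.cosh ((T - t) / α) / Real.cosh (T / α)) * d) - d)) ^ 2)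
      = C * Real.cosh (2 * ((T - t) / α)) := by
    intro t
    have hc : Real.cosh ((T - t) / α) ≠ 0 := ne_of_gt (Real.cosh_pos _)
    have hs : Real.sinh ((T - t)/α) ^ 2 = Real.cosh ((T - t)/α) ^ 2 - 1 := by
      have := Real.cosh_sq ((T - t)/α); linarith
    rw [Real.cosh_two_mul, Real.tanh_eq_sinh_div_cosh, hC]
    field_simp
    nlinarith [sq_nonneg (Real.cosh ((T-t)/α)), hs]
  have h1 : (∫ t in (0:ℝ)..T, (((Real.cosh ((T - t) / α) / Real.cosh (T / α)) * r0
          + (1 - Real.cosh ((T - t) / α) / Real.cosh (T / α)) * d - d) ^ 2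
        + α ^ 2 * (-(1 / α ^ 2) * (α * Real.tanh ((T - t) / α))
            * (((Real.cosh ((T - t) / α) / Real.cosh (T / α)) * r0
                + (1 - Real.cosh ((T - t) / α) / Real.cosh (T / α)) * d) - d)) ^ 2))
      = ∫ t in (0:ℝ)..T, C * Real.cosh (2 * ((T - t) / α)) := by
    apply intervalIntegral.integral_congr
    intro t _
    exact hcongr t
  rw [h1]
  have hderiv : ∀ t ∈ Set.uIcc (0:ℝ) T,
      HasDerivAt (fun t : ℝ => (-(C * (α / 2))) * Real.sinh (2 * ((T - t) / α)))
        (C * Real.cosh (2 * ((T - t) / α))) t := by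
    intro t _
    have h2 : HasDerivAt (fun t : ℝ => 2 * ((T - t) / α)) (-(2/α)) t := by
      have := ((hasDerivAt_id t).const_sub T).div_const α
      have := this.const_mul 2
      refine this.congr_deriv ?_
      ring
    have h3 := (h2.sinh).const_mul (-(C * (α / 2)))
    refine h3.congr_deriv ?_
    field_simp
  rw [intervalIntegral.integral_eq_sub_of_hasDerivAt hderiv]
  · simp only [sub_zero, sub_self, zero_div, mul_zero, Real.sinh_zero]
    rw [hC, Real.tanh_eq_sinh_div_cosh, Real.sinh_two_mul]
    field_simp
    ring
  · apply Continuous.intervalIntegrable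
    continuity
end

section
/- The steady-state frequency response from reference d to state r of the cascade ẏ = (1/α)y + d (anticausal) followed by ṙ = −(1/α)r − (1/α²)y is H(ω) = 1/(α²ω² + 1). Concretely, for d(t) = cos(ωt), the bounded solution pair (y, r) with y bounded on ℝ satisfies r(t) = cos(ωt)/(α²ω² + 1). -/
/-- A bounded solution of `f' = k f` with `k ≠ 0` is identically zero. -/
lemma aux_bdd_lin (k : ℝ) (hk : k ≠ 0) (f : ℝ → ℝ)
    (hf : ∀ t, HasDerivAt f (k * f t) t) (C : ℝ) (hC : ∀ t, |f t| ≤ C) :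
    ∀ t, f t = 0 := by
  have hg : ∀ t, HasDerivAt (fun t => f t * Real.exp (-k * t)) 0 t := by
    intro t
    have h1 : HasDerivAt (fun t : ℝ => Real.exp (-k * t)) (Real.exp (-k * t) * (-k)) t := by
      simpa using ((hasDerivAt_id t).const_mul (-k)).exp
    have h2 := (hf t).mul h1
    refine h2.congr_deriv ?_
    ring
  have hconst : ∀ t, f t * Real.exp (-k * t) = f 0 := by
    intro t
    have := is_const_of_deriv_eq_zero (f := fun t => f t * Real.exp (-k * t))
      (fun x => (hg x).differentiableAt) (fun x => (hg x).deriv) t 0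
    simpa using this
  have key : ∀ t, f t = f 0 * Real.exp (k * t) := by
    intro t
    have h := hconst t
    calc f t = f t * Real.exp (-k * t) * Real.exp (k * t) := by
          rw [mul_assoc, ← Real.exp_add]; simp
      _ = f 0 * Real.exp (k * t) := by rw [h]
  have h0 : f 0 = 0 := by
    by_contra h0
    have hfa : 0 < |f 0| := abs_pos.mpr h0
    set s : ℝ := max 0 (C / |f 0|) with hs
    have hexp : C / |f 0| < Real.exp s := by
      calc C / |f 0| ≤ s := le_max_right _ _
        _ < s + 1 := by linarith
        _ ≤ Real.exp s := Real.add_one_le_exp s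
    have ht := hC (s / k)
    rw [key (s / k)] at ht
    have hks : k * (s / k) = s := by field_simp
    rw [hks, abs_mul, Real.abs_exp] at ht
    have hlt : C < Real.exp s * |f 0| := (div_lt_iff₀ hfa).mp hexp
    nlinarith
  intro t; rw [key t, h0, zero_mul]

/-- Steady-state frequency response of the cascade `ẏ = (1/α) y + d` (anticausal)
followed by `ṙ = −(1/α) r − (1/α²) y` is `H(ω) = 1/(α²ω² + 1)`: for
`d(t) = cos(ωt)`, the bounded solution pair `(y, r)` satisfies
`r(t) = cos(ωt)/(α²ω² + 1)`. -/
theorem stmt15 (α ω : ℝ) (hα : 0 < α) (y r : ℝ → ℝ)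
    (hy : ∀ t : ℝ, HasDerivAt y ((1 / α) * y t + Real.cos (ω * t)) t)
    (hr : ∀ t : ℝ, HasDerivAt r (-(1 / α) * r t - (1 / α ^ 2) * y t) t)
    (hyb : ∃ C : ℝ, ∀ t, |y t| ≤ C) (hrb : ∃ C : ℝ, ∀ t, |r t| ≤ C) :
    ∀ t : ℝ, r t = Real.cos (ω * t) / (α ^ 2 * ω ^ 2 + 1) := by
  have hα' : α ≠ 0 := ne_of_gt hα
  set K : ℝ := α ^ 2 * ω ^ 2 + 1 with hKdef
  have hK : 0 < K := by positivity
  have hK' : K ≠ 0 := ne_of_gt hK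
  set ys : ℝ → ℝ := fun t => (-α * Real.cos (ω * t) + α ^ 2 * ω * Real.sin (ω * t)) / K
    with hysdef
  set rs : ℝ → ℝ := fun t => Real.cos (ω * t) / K with hrsdef
  have hcosd : ∀ t : ℝ, HasDerivAt (fun t => Real.cos (ω * t)) (-Real.sin (ω * t) * ω) t := by
    intro t
    simpa using ((hasDerivAt_id t).const_mul ω).cos
  have hsind : ∀ t : ℝ, HasDerivAt (fun t => Real.sin (ω * t)) (Real.cos (ω * t) * ω) t := by
    intro t
    simpa using ((hasDerivAt_id t).const_mul ω).sin
  have hysd : ∀ t, HasDerivAt ys ((1 / α) * ys t + Real.cos (ω * t)) t := by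
    intro t
    have h := (((hcosd t).const_mul (-α)).add ((hsind t).const_mul (α ^ 2 * ω))).div_const K
    refine h.congr_deriv ?_
    simp only [hysdef]
    field_simp
    ring
  have hrsd : ∀ t, HasDerivAt rs (-(1 / α) * rs t - (1 / α ^ 2) * ys t) t := by
    intro t
    have h := (hcosd t).div_const K
    refine h.congr_deriv ?_
    simp only [hysdef, hrsdef]
    field_simp
    ring
  -- bounds for steady-state solutions
  have hys_bdd : ∀ t, |ys t| ≤ (|α| + |α ^ 2 * ω|) / K := by
    intro t
    simp only [hysdef]
    rw [abs_div, abs_of_pos hK]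
    gcongr
    calc |(-α * Real.cos (ω * t) + α ^ 2 * ω * Real.sin (ω * t))|
        ≤ |(-α * Real.cos (ω * t))| + |α ^ 2 * ω * Real.sin (ω * t)| := abs_add_le _ _
      _ ≤ |α| * 1 + |α ^ 2 * ω| * 1 := by
          rw [abs_mul, abs_mul, abs_neg]
          gcongr
          · exact Real.abs_cos_le_one _
          · exact Real.abs_sin_le_one _
      _ = |α| + |α ^ 2 * ω| := by ring
  have hrs_bdd : ∀ t, |rs t| ≤ 1 / K := by
    intro t
    simp only [hrsdef]
    rw [abs_div, abs_of_pos hK]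
    gcongr
    exact Real.abs_cos_le_one _
  -- uniqueness for y
  have hy0 : ∀ t, y t = ys t := by
    obtain ⟨C, hC⟩ := hyb
    have := aux_bdd_lin (1 / α) (one_div_ne_zero hα') (fun t => y t - ys t)
      (fun t => by
        have h := (hy t).sub (hysd t)
        refine h.congr_deriv ?_
        ring)
      (C + (|α| + |α ^ 2 * ω|) / K)
      (fun t => by
        calc |y t - ys t| ≤ |y t| + |ys t| := abs_sub _ _
          _ ≤ C + (|α| + |α ^ 2 * ω|) / K := add_le_add (hC t) (hys_bdd t))
    intro t
    exact sub_eq_zero.mp (this t)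
  -- uniqueness for r
  have hr0 : ∀ t, r t = rs t := by
    obtain ⟨C, hC⟩ := hrb
    have := aux_bdd_lin (-(1 / α)) (neg_ne_zero.mpr (one_div_ne_zero hα')) (fun t => r t - rs t)
      (fun t => by
        have h := (hr t).sub (hrsd t)
        have hyt := hy0 t
        refine h.congr_deriv ?_
        rw [hyt]
        ring)
      (C + 1 / K)
      (fun t => by
        calc |r t - rs t| ≤ |r t| + |rs t| := abs_sub _ _
          _ ≤ C + 1 / K := add_le_add (hC t) (hrs_bdd t))
    intro t
    exact sub_eq_zero.mp (this t)
  intro t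
  rw [hr0 t]
end
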